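/- Sup-convolution of a quadratic form: let X be a symmetric N×N real matrix and ε ∈ (0,1) be such that all eigenvalues of X are strictly less than 1/ε. Then for every ξ ∈ ℝ^N, sup over ζ ∈ ℝ^N of {Xζ·ζ - |ξ-ζ|²/ε} equals X^ε ξ·ξ, where X^ε = (I - εX)^{-1} X. -/

import Mathlib

open Matrix

/-- Sup-convolution of a quadratic form: if X is symmetric and ε ∈ (0,1) is such
that εX < I (all eigenvalues of X strictly less than 1/ε), then for every ξ,
sup_ζ { Xζ·ζ - |ξ-ζ|²/ε } = X^ε ξ·ξ with X^ε = (I - εX)⁻¹ X. -/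
theorem stmt5 (N : ℕ) (hN : 1 ≤ N) (X : Matrix (Fin N) (Fin N) ℝ) (hX : X.IsSymm)
    (ε : ℝ) (hε : 0 < ε) (hε1 : ε < 1)
    (hpos : ((1 : Matrix (Fin N) (Fin N) ℝ) - ε • X).PosDef)
    (ξ : Fin N → ℝ) :
    IsLUB (Set.range fun ζ : Fin N → ℝ =>
        X.mulVec ζ ⬝ᵥ ζ - ((ξ - ζ) ⬝ᵥ (ξ - ζ)) / ε)
      ((((1 : Matrix (Fin N) (Fin N) ℝ) - ε • X)⁻¹ * X).mulVec ξ ⬝ᵥ ξ) := by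
  classical
  set A : Matrix (Fin N) (Fin N) ℝ := (1 : Matrix (Fin N) (Fin N) ℝ) - ε • X with hA
  have hdet : IsUnit A.det := isUnit_iff_ne_zero.mpr (ne_of_gt hpos.det_pos)
  have hAinv : A * A⁻¹ = 1 := A.mul_nonsing_inv hdet
  have hinvA : A⁻¹ * A = 1 := A.nonsing_inv_mul hdet
  have hAsum : A + ε • X = 1 := by simp [hA]
  have hinv_eq : A⁻¹ = 1 + ε • (A⁻¹ * X) := by
    calc A⁻¹ = A⁻¹ * (A + ε • X) := by rw [hAsum, mul_one]
    _ = 1 + ε • (A⁻¹ * X) := by rw [mul_add, hinvA, Matrix.mul_smul]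
  set ζs : Fin N → ℝ := A⁻¹.mulVec ξ with hζs
  have hAζs : A.mulVec ζs = ξ := by
    rw [hζs, mulVec_mulVec, hAinv, one_mulVec]
  set v : ℝ := ((A⁻¹ * X).mulVec ξ) ⬝ᵥ ξ with hv
  have hAs : Aᵀ = A := by
    simp [hA, transpose_sub, transpose_smul, hX.eq]
  have hsym : ∀ u w : Fin N → ℝ, A.mulVec u ⬝ᵥ w = u ⬝ᵥ A.mulVec w := by
    intro u w
    rw [dotProduct_comm, dotProduct_mulVec, ← mulVec_transpose, hAs, dotProduct_comm,
      dotProduct_mulVec, ← mulVec_transpose, hAs]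
  -- value of ξ ⬝ᵥ ζs
  have hξζs : ξ ⬝ᵥ ζs = ξ ⬝ᵥ ξ + ε * v := by
    have : ζs = ξ + ε • (A⁻¹ * X).mulVec ξ := by
      rw [hζs]
      conv_lhs => rw [hinv_eq]
      rw [Matrix.add_mulVec, one_mulVec, smul_mulVec]
    rw [this, dotProduct_add, dotProduct_smul, smul_eq_mul, hv,
      dotProduct_comm ξ ((A⁻¹ * X).mulVec ξ)]
  have hAζ : ∀ ζ : Fin N → ℝ, A.mulVec ζ ⬝ᵥ ζ = ζ ⬝ᵥ ζ - ε * (X.mulVec ζ ⬝ᵥ ζ) := by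
    intro ζ
    rw [hA, Matrix.sub_mulVec, one_mulVec, smul_mulVec, sub_dotProduct,
      smul_dotProduct, smul_eq_mul]
  -- the key identity
  have key : ∀ ζ : Fin N → ℝ,
      X.mulVec ζ ⬝ᵥ ζ - ((ξ - ζ) ⬝ᵥ (ξ - ζ)) / ε
        = v - (A.mulVec (ζ - ζs) ⬝ᵥ (ζ - ζs)) / ε := by
    intro ζ
    have hQ : A.mulVec (ζ - ζs) ⬝ᵥ (ζ - ζs)
        = (ζ ⬝ᵥ ζ - ε * (X.mulVec ζ ⬝ᵥ ζ)) - 2 * (ξ ⬝ᵥ ζ) + (ξ ⬝ᵥ ξ + ε * v) := by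
      rw [Matrix.mulVec_sub, sub_dotProduct, dotProduct_sub, dotProduct_sub,
        hAζs, hsym ζ ζs, hAζs, hAζ ζ, hξζs, dotProduct_comm ζ ξ]
      ring
    have hsq : (ξ - ζ) ⬝ᵥ (ξ - ζ) = ξ ⬝ᵥ ξ - 2 * (ξ ⬝ᵥ ζ) + ζ ⬝ᵥ ζ := by
      rw [sub_dotProduct, dotProduct_sub, dotProduct_sub, dotProduct_comm ζ ξ]
      ring
    rw [hQ, hsq]
    field_simp
    ring
  constructor
  · rintro x ⟨ζ, rfl⟩
    simp only
    rw [key ζ]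
    have h0 : 0 ≤ A.mulVec (ζ - ζs) ⬝ᵥ (ζ - ζs) := by
      have := hpos.posSemidef.dotProduct_mulVec_nonneg (ζ - ζs)
      simpa [star_trivial, dotProduct_comm] using this
    have : 0 ≤ (A.mulVec (ζ - ζs) ⬝ᵥ (ζ - ζs)) / ε := div_nonneg h0 hε.le
    linarith
  · intro b hb
    have hmem : v ∈ Set.range fun ζ : Fin N → ℝ =>
        X.mulVec ζ ⬝ᵥ ζ - ((ξ - ζ) ⬝ᵥ (ξ - ζ)) / ε := by
      refine ⟨ζs, ?_⟩
      show X.mulVec ζs ⬝ᵥ ζs - ((ξ - ζs) ⬝ᵥ (ξ - ζs)) / ε = v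
      rw [key ζs]
      simp
    exact hb hmem
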